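/- Let n = 2k+1 be odd and a a nonzero element of F_{2^n}. Then the image D of the map f(x) = x + a⁻¹·Tr(a³x³) is a (2^{2k}, 2, 2^{2k}, 2^{2k-1}) relative difference set in the additive group (F_{2^n}, +) relative to the subgroup N = {0, a⁻¹}: every element of F_{2^n} outside N is represented exactly 2^{2k-1} times as a difference d₁ - d₂ with d₁ ≠ d₂ in D, and no nonzero element of N is so represented. -/
import Mathlib


section AuxRDS
variable {F : Type*} [Field F] [Fintype F] [Algebra (ZMod 2) F]

lemma auxRDS_charP : CharP F 2 :=
  charP_of_injective_ringHom (algebraMap (ZMod 2) F).injective 2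

lemma auxRDS_trace_sq (x : F) :
    Algebra.trace (ZMod 2) F (x ^ 2) = Algebra.trace (ZMod 2) F x := by
  haveI := auxRDS_charP (F := F)
  have : ∃ e : F ≃ₐ[ZMod 2] F, ∀ y, e y = y ^ 2 := by
    refine ⟨AlgEquiv.ofBijective ⟨frobenius F 2, fun c => ?_⟩ ?_, fun y => rfl⟩
    · show (algebraMap (ZMod 2) F c) ^ 2 = algebraMap (ZMod 2) F c
      rw [← map_pow]; congr 1; revert c; decide
    · exact (Finite.injective_iff_bijective).mp (frobenius F 2).injective
  obtain ⟨e, he⟩ := this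
  rw [← he, Algebra.trace_eq_of_algEquiv]

lemma auxRDS_sqrt (u : F) : ∃ c : F, c ^ 2 = u := by
  haveI := auxRDS_charP (F := F)
  obtain ⟨c, hc⟩ := (frobeniusEquiv F 2).surjective u
  exact ⟨c, hc⟩

lemma auxRDS_count (b c : F) (hb : b ≠ 0) (v : ZMod 2) :
    ((Finset.univ.filter fun x : F => Algebra.trace (ZMod 2) F (b * x + c) = v).card) * 2
      = Fintype.card F := by
  haveI := auxRDS_charP (F := F)
  haveI : FiniteDimensional (ZMod 2) F := Module.Finite.of_finite
  set T := Algebra.trace (ZMod 2) F with hT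
  obtain ⟨u, hu⟩ := Algebra.trace_surjective (ZMod 2) F 1
  set x₀ := b⁻¹ * u with hx₀
  have hbx₀ : T (b * x₀) = 1 := by rw [hx₀, mul_inv_cancel_left₀ hb]; exact hu
  have hx₀x₀ : ∀ x : F, x + x₀ + x₀ = x := by
    intro x; rw [add_assoc, CharTwo.add_self_eq_zero, add_zero]
  have key : ∀ w : ZMod 2,
      (Finset.univ.filter fun x : F => T (b * x + c) = w).card
        = (Finset.univ.filter fun x : F => T (b * x + c) = w + 1).card := by
    intro w
    refine Finset.card_bij' (fun x _ => x + x₀) (fun x _ => x + x₀) ?_ ?_ ?_ ?_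
    · intro x hx
      simp only [Finset.mem_filter, Finset.mem_univ, true_and] at hx ⊢
      rw [mul_add, add_right_comm, map_add, hx, hbx₀]
    · intro x hx
      simp only [Finset.mem_filter, Finset.mem_univ, true_and] at hx ⊢
      rw [mul_add, add_right_comm, map_add, hx, hbx₀]
      exact (by decide : ∀ t : ZMod 2, t + 1 + 1 = t) w
    · intro x _; exact hx₀x₀ x
    · intro x _; exact hx₀x₀ x
  have hsplit :
      (Finset.univ.filter fun x : F => T (b * x + c) = 0).card
        + (Finset.univ.filter fun x : F => T (b * x + c) = 1).card = Fintype.card F := by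
    have h := Finset.card_filter_add_card_filter_not
      (s := (Finset.univ : Finset F)) (p := fun x : F => T (b * x + c) = 0)
    have hfe : (Finset.univ.filter fun x : F => ¬ T (b * x + c) = 0)
        = Finset.univ.filter fun x : F => T (b * x + c) = 1 :=
      Finset.filter_congr fun x _ => (by decide : ∀ t : ZMod 2, (¬ t = 0) ↔ t = 1) _
    rw [hfe] at h
    rwa [Finset.card_univ] at h
  rcases (by decide : ∀ t : ZMod 2, t = 0 ∨ t = 1) v with hv | hv <;> subst hv
  · have := key 0; simp only [zero_add] at this; omega
  · have := key 1
    have h11 : (1 + 1 : ZMod 2) = 0 := by decide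
    rw [h11] at this; omega

lemma auxRDS_cube {n : ℕ} (hodd : Odd n) (hcard : Fintype.card F = 2 ^ n)
    (u : F) (hu : u ^ (3 : ℕ) = 1) : u = 1 := by
  have hne : u ≠ 0 := by
    intro h; rw [h] at hu; simp at hu
  have h3 : orderOf u ∣ 3 := orderOf_dvd_of_pow_eq_one hu
  have h2 : orderOf u ∣ 2 ^ n - 1 := by
    apply orderOf_dvd_of_pow_eq_one
    rw [← hcard]; exact FiniteField.pow_card_sub_one_eq_one u hne
  have hcop : Nat.Coprime 3 (2 ^ n - 1) := by
    obtain ⟨m, rfl⟩ := hodd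
    rw [Nat.Prime.coprime_iff_not_dvd (by norm_num)]
    have h4 : 4 ^ m % 3 = 1 := by
      rw [Nat.pow_mod]; norm_num
    have hpow : 2 ^ (2 * m + 1) = 4 ^ m * 2 := by
      rw [pow_succ, pow_mul]; norm_num
    have hge : 1 ≤ 4 ^ m := Nat.one_le_pow _ _ (by norm_num)
    rw [hpow]
    omega
  have : orderOf u ∣ 1 := hcop ▸ Nat.dvd_gcd h3 h2
  rw [Nat.dvd_one] at this
  exact orderOf_eq_one_iff.mp this

end AuxRDS


/-- `D` is a relative `(m, n, k, lam)` difference set in the additive group `G`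
relative to the subgroup (given as a set) `N`: `|G| = m * n`, `|N| = n`, `|D| = k`,
every element outside `N` is represented exactly `lam` times as a difference of
distinct elements of `D`, and no nonzero element of `N` is so represented. -/
def IsRelDiffSet {G : Type*} [AddCommGroup G] (D N : Set G) (m n k lam : ℕ) : Prop :=
  Nat.card G = m * n ∧ N.ncard = n ∧ D.ncard = k ∧
  (∀ g : G, g ∉ N →
    {p : G × G | p.1 ∈ D ∧ p.2 ∈ D ∧ p.1 ≠ p.2 ∧ p.1 - p.2 = g}.ncard = lam) ∧
  (∀ g : G, g ∈ N → g ≠ 0 →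
    {p : G × G | p.1 ∈ D ∧ p.2 ∈ D ∧ p.1 ≠ p.2 ∧ p.1 - p.2 = g}.ncard = 0)

theorem stmt_3 {n k : ℕ} (hn : n = 2 * k + 1) (F : Type*) [Field F] [Fintype F]
    [Algebra (ZMod 2) F] (hcard : Fintype.card F = 2 ^ n)
    (a : F) (ha : a ≠ 0)
    (f : F → F)
    (hf : ∀ x, f x = x + a⁻¹ * algebraMap (ZMod 2) F (Algebra.trace (ZMod 2) F (a ^ 3 * x ^ 3))) :
    IsRelDiffSet (Set.range f) {0, a⁻¹} (2 ^ (2 * k)) 2 (2 ^ (2 * k)) (2 ^ (2 * k - 1)) := by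
  classical
  haveI : CharP F 2 := auxRDS_charP
  set T := Algebra.trace (ZMod 2) F with hT
  set E := algebraMap (ZMod 2) F with hE
  have h2F : (2 : F) = 0 := by
    have := CharP.cast_eq_zero F 2
    exact_mod_cast this
  have hainv : a⁻¹ ≠ 0 := inv_ne_zero ha
  have hodd : Odd n := ⟨k, by omega⟩
  have hEinj : Function.Injective E := (algebraMap (ZMod 2) F).injective
  have hcube : ∀ u : F, u ^ (3 : ℕ) = 1 → u = 1 := fun u hu => auxRDS_cube hodd hcard u hu
  have hmem : ∀ t : ZMod 2, E t = 0 ∨ E t = 1 := by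
    intro t
    rcases (by decide : ∀ t : ZMod 2, t = 0 ∨ t = 1) t with h | h <;> rw [h]
    · left; exact map_zero E
    · right; exact map_one E
  -- cube expansion in characteristic two
  have hexp : ∀ x g : F, a^3*(x+g)^3 = a^3*x^3 + (a^3*g*x^2 + a^3*g^2*x + a^3*g^3) := by
    intro x g
    linear_combination (a^3*(x^2*g + x*g^2)) * h2F
  have htrsq : ∀ u : F, T (u^2) = T u := fun u => auxRDS_trace_sq u
  have htr3 : ∀ x g : F, T (a^3*x^3) + T (a^3*(x+g)^3) = T (a^3*g*x^2 + a^3*g^2*x + a^3*g^3) := by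
    intro x g
    rw [hexp x g, map_add]
    exact (by decide : ∀ p q : ZMod 2, p + (p + q) = q) _ _
  have hT1 : T 1 = 1 := by
    have hrank : Module.finrank (ZMod 2) F = n := by
      have h := Module.card_eq_pow_finrank (K := ZMod 2) (V := F)
      rw [hcard, ZMod.card] at h
      exact (Nat.pow_right_injective (le_refl 2) h.symm)
    have h := Algebra.trace_algebraMap (R := ZMod 2) (S := F) 1
    rw [← hT, ← hE, map_one, hrank] at h
    rw [h, nsmul_eq_mul, mul_one, hn]
    push_cast
    try rw [(by decide : (2 : ZMod 2) = 0)]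
    try ring
    try decide
  -- the trace shift identity
  have hshift : ∀ x : F, T (a^3*(x+a⁻¹)^3) = T (a^3*x^3) + 1 := by
    intro x
    have h := htr3 x a⁻¹
    have e2 : a^3*a⁻¹*x^2 + a^3*(a⁻¹)^2*x + a^3*(a⁻¹)^3 = (a*x)^2 + ((a*x) + 1) := by
      field_simp
      ring
    rw [e2, map_add, htrsq, map_add, hT1] at h
    have hsum : T (a^3*x^3) + T (a^3*(x+a⁻¹)^3) = 1 := by
      rw [h]
      exact (by decide : ∀ p : ZMod 2, p + (p + 1) = 1) _
    exact (by decide : ∀ p q : ZMod 2, p + q = 1 → q = p + 1) _ _ hsum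
  have hperiod : ∀ x : F, f (x + a⁻¹) = f x := by
    intro x
    rw [hf (x + a⁻¹), hf x, hshift x, map_add, map_one]
    linear_combination a⁻¹ * h2F
  -- fibers of f
  have hfib : ∀ x y : F, f x = f y ↔ (y = x ∨ y = x + a⁻¹) := by
    intro x y
    constructor
    · intro hxy
      rw [hf x, hf y] at hxy
      have hy : y = x + a⁻¹ * E (T (a^3*x^3)) + a⁻¹ * E (T (a^3*y^3)) := by
        linear_combination -hxy - (a⁻¹ * E (T (a^3*y^3))) * h2F
      rcases hmem (T (a^3*x^3)) with h1 | h1 <;> rcases hmem (T (a^3*y^3)) with h2 | h2 <;>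
          rw [h1, h2] at hy <;> [left; right; right; left] <;>
        first
          | linear_combination hy
          | linear_combination hy + a⁻¹ * h2F
    · rintro (rfl | rfl)
      · rfl
      · exact (hperiod x).symm
  have hfibfin : ∀ x₀ : F, Finset.univ.filter (fun x => f x = f x₀) = {x₀, x₀ + a⁻¹} := by
    intro x₀
    ext z
    simp only [Finset.mem_filter, Finset.mem_univ, true_and, Finset.mem_insert,
      Finset.mem_singleton]
    constructor
    · intro h
      exact (hfib x₀ z).mp h.symm
    · intro h
      exact ((hfib x₀ z).mpr h).symm
  have hpair : ∀ x₀ : F, ({x₀, x₀ + a⁻¹} : Finset F).card = 2 := by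
    intro x₀
    have hnm : x₀ ∉ ({x₀ + a⁻¹} : Finset F) := by
      simp only [Finset.mem_singleton]
      intro h
      exact hainv (by linear_combination -h)
    rw [Finset.card_insert_of_notMem hnm, Finset.card_singleton]
  set Df := Finset.univ.image f with hDfdef
  have hDfmem : ∀ x : F, f x ∈ Df := by
    intro x; rw [hDfdef]; exact Finset.mem_image_of_mem f (Finset.mem_univ x)
  have hDfcard : Df.card * 2 = 2 ^ n := by
    have hsum := Finset.card_eq_sum_card_fiberwise (f := f) (s := Finset.univ) (t := Df)
      (fun x _ => hDfmem x)
    rw [Finset.card_univ, hcard] at hsum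
    have hfib2 : ∀ d ∈ Df, (Finset.univ.filter fun x => f x = d).card = 2 := by
      intro d hd
      rw [hDfdef] at hd
      obtain ⟨x₀, -, rfl⟩ := Finset.mem_image.mp hd
      rw [hfibfin x₀]
      exact hpair x₀
    rw [Finset.sum_congr rfl hfib2, Finset.sum_const, smul_eq_mul] at hsum
    omega
  have hpow2 : (2:ℕ) ^ n = 2 ^ (2*k) * 2 := by rw [hn, pow_succ]
  have hDcard : Df.card = 2 ^ (2*k) := by omega
  -- identification of the set-theoretic pair sets with finsets
  have hset : ∀ g : F, {p : F × F | p.1 ∈ Set.range f ∧ p.2 ∈ Set.range f ∧ p.1 ≠ p.2 ∧ p.1 - p.2 = g}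
      = ↑(Finset.univ.filter fun p : F × F => p.1 ∈ Df ∧ p.2 ∈ Df ∧ p.1 ≠ p.2 ∧ p.1 - p.2 = g) := by
    intro g
    ext p
    simp only [Set.mem_setOf_eq, Finset.coe_filter, Finset.mem_univ, true_and, hDfdef,
      Finset.mem_image, Set.mem_range]
    try tauto
  have hsub : ∀ u v : F, u - v = u + v := by
    intro u v
    rw [sub_eq_add_neg, CharTwo.neg_eq]
  -- the linearization of the quadratic trace expression
  have hlin : ∀ g : F, g ≠ 0 → g ≠ a⁻¹ →
      ∃ b : F, b ≠ 0 ∧ ∀ x, T (a^3*g*x^2 + a^3*g^2*x + a^3*g^3) = T (b*x + a^3*g^3) := by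
    intro g hg hga
    obtain ⟨c, hc⟩ := auxRDS_sqrt (a^3*g)
    refine ⟨c + a^3*g^2, ?_, ?_⟩
    · intro h0
      have hcc : c = a^3*g^2 := by linear_combination h0 - (a^3*g^2) * h2F
      have hag : a^3*g ≠ 0 := mul_ne_zero (pow_ne_zero _ ha) hg
      have h31 : (a*g)^(3:ℕ) = 1 := by
        have h1 : a^3*g = (a^3*g^2)^2 := by rw [← hcc, hc]
        have h2 : a^3*g * ((a*g)^(3:ℕ)) = a^3*g * 1 := by linear_combination -h1
        exact mul_left_cancel₀ hag h2
      have := hcube _ h31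
      exact hga ((inv_eq_of_mul_eq_one_right this).symm)
    · intro x
      have e1 : a^3*g*x^2 + a^3*g^2*x + a^3*g^3 = (c*x)^2 + (a^3*g^2*x + a^3*g^3) := by
        rw [mul_pow, hc]; ring
      rw [e1, map_add, htrsq, ← map_add]
      congr 1
      ring
  refine ⟨?_, ?_, ?_, ?_, ?_⟩
  · rw [Nat.card_eq_fintype_card, hcard, hpow2]
  · exact Set.ncard_pair (fun h => hainv h.symm)
  · have hcoe : (Set.range f) = ↑Df := by
      rw [hDfdef]
      ext z
      simp
    rw [hcoe, Set.ncard_coe_finset, hDcard]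
  · -- main count
    intro g hg
    simp only [Set.mem_insert_iff, Set.mem_singleton_iff, not_or] at hg
    obtain ⟨hg0, hga⟩ := hg
    have hk : 1 ≤ k := by
      by_contra hk
      have hk0 : k = 0 := by omega
      have hc2 : Fintype.card F = 2 := by rw [hcard, hn, hk0]; norm_num
      have hnm1 : (a⁻¹ : F) ∉ ({g} : Finset F) := by
        simp only [Finset.mem_singleton]
        exact fun h => hga h.symm
      have hnm2 : (0 : F) ∉ ({a⁻¹, g} : Finset F) := by
        simp only [Finset.mem_insert, Finset.mem_singleton]
        push_neg
        exact ⟨fun h => hainv h.symm, fun h => hg0 h.symm⟩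
      have h3 : ({0, a⁻¹, g} : Finset F).card = 3 := by
        rw [Finset.card_insert_of_notMem hnm2, Finset.card_insert_of_notMem hnm1,
          Finset.card_singleton]
      have hle := Finset.card_le_univ ({0, a⁻¹, g} : Finset F)
      rw [h3, hc2] at hle
      omega
    have hg'0 : g + a⁻¹ ≠ 0 := by
      intro h
      exact hga (by linear_combination h - a⁻¹ * h2F)
    have hg'a : g + a⁻¹ ≠ a⁻¹ := by
      intro h
      exact hg0 (by linear_combination h)
    obtain ⟨b₀, hb₀, htr₀⟩ := hlin g hg0 hga
    obtain ⟨b₁, hb₁, htr₁⟩ := hlin (g + a⁻¹) hg'0 hg'a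
    rw [hset g, Set.ncard_coe_finset]
    set S := Finset.univ.filter
      (fun p : F × F => p.1 ∈ Df ∧ p.2 ∈ Df ∧ p.1 ≠ p.2 ∧ p.1 - p.2 = g) with hS
    set A := Finset.univ.filter (fun p : F × F => f p.1 + f p.2 = g) with hA
    have hAmem : ∀ p : F × F, p ∈ A → (f p.1, f p.2) ∈ S := by
      intro p hp
      rw [hA, Finset.mem_filter] at hp
      rw [hS, Finset.mem_filter]
      refine ⟨Finset.mem_univ _, hDfmem _, hDfmem _, ?_, ?_⟩
      · intro hEq
        have hEq' : f p.1 = f p.2 := hEq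
        exact hg0 (by linear_combination -hp.2 + hEq' + (f p.2) * h2F)
      · show f p.1 - f p.2 = g
        rw [hsub]
        exact hp.2
    have hAcard : A.card = S.card * 4 := by
      rw [Finset.card_eq_sum_card_fiberwise (f := fun p : F × F => (f p.1, f p.2)) hAmem]
      have hinner : ∀ q ∈ S, (A.filter fun p : F × F => (f p.1, f p.2) = q).card = 4 := by
        intro q hq
        rw [hS, Finset.mem_filter] at hq
        obtain ⟨-, hq1, hq2, hqne, hqdiff⟩ := hq
        rw [hDfdef] at hq1 hq2
        obtain ⟨x₁, -, hx₁⟩ := Finset.mem_image.mp hq1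
        obtain ⟨x₂, -, hx₂⟩ := Finset.mem_image.mp hq2
        have hprodeq : A.filter (fun p : F × F => (f p.1, f p.2) = q)
            = (({x₁, x₁ + a⁻¹} : Finset F) ×ˢ ({x₂, x₂ + a⁻¹} : Finset F)) := by
          ext p
          rw [Finset.mem_filter, hA, Finset.mem_filter, Finset.mem_product]
          have hmem1 : p.1 ∈ ({x₁, x₁ + a⁻¹} : Finset F) ↔ f p.1 = f x₁ := by
            rw [← hfibfin x₁]
            simp only [Finset.mem_filter, Finset.mem_univ, true_and]
          have hmem2 : p.2 ∈ ({x₂, x₂ + a⁻¹} : Finset F) ↔ f p.2 = f x₂ := by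
            rw [← hfibfin x₂]
            simp only [Finset.mem_filter, Finset.mem_univ, true_and]
          constructor
          · rintro ⟨⟨-, -⟩, hfq⟩
            have h1 : f p.1 = q.1 := congrArg Prod.fst hfq
            have h2 : f p.2 = q.2 := congrArg Prod.snd hfq
            exact ⟨hmem1.mpr (by rw [h1, ← hx₁]), hmem2.mpr (by rw [h2, ← hx₂])⟩
          · rintro ⟨hp1, hp2⟩
            have h1 : f p.1 = q.1 := by rw [hmem1.mp hp1, hx₁]
            have h2 : f p.2 = q.2 := by rw [hmem2.mp hp2, hx₂]
            refine ⟨⟨Finset.mem_univ _, ?_⟩, ?_⟩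
            · rw [h1, h2, ← hsub, hqdiff]
            · exact Prod.ext h1 h2
        rw [hprodeq, Finset.card_product, hpair x₁, hpair x₂]
      rw [Finset.sum_congr rfl hinner, Finset.sum_const, smul_eq_mul]
    -- split A according to whether p.2 = p.1 + g
    have hsplitA := Finset.card_filter_add_card_filter_not
      (s := A) (p := fun p : F × F => p.2 = p.1 + g)
    have heq₁ : A.filter (fun p : F × F => ¬ p.2 = p.1 + g)
        = A.filter (fun p : F × F => p.2 = p.1 + (g + a⁻¹)) := by
      apply Finset.filter_congr
      intro p hp
      rw [hA, Finset.mem_filter] at hp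
      have hsum := hp.2
      rw [hf p.1, hf p.2] at hsum
      constructor
      · intro hne2
        rcases hmem (T (a^3*p.1^3)) with h1 | h1 <;> rcases hmem (T (a^3*p.2^3)) with h2 | h2 <;>
            rw [h1, h2] at hsum
        · exact absurd (by linear_combination hsum - p.1 * h2F) hne2
        · linear_combination hsum - p.1 * h2F - a⁻¹ * h2F
        · linear_combination hsum - p.1 * h2F - a⁻¹ * h2F
        · exact absurd (by linear_combination hsum - p.1 * h2F - a⁻¹ * h2F) hne2
      · intro h h'
        exact hainv (by linear_combination h' - h)
    -- first piece: pairs with p.2 = p.1 + g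
    have hc₀ : (A.filter fun p : F × F => p.2 = p.1 + g).card
        = (Finset.univ.filter fun x : F => T (b₀*x + a^3*g^3) = 0).card := by
      refine Finset.card_bij' (fun p _ => p.1) (fun x _ => (x, x + g)) ?_ ?_ ?_ ?_
      · rintro ⟨x, y⟩ hp
        rw [Finset.mem_filter, hA, Finset.mem_filter] at hp
        obtain ⟨⟨-, hsum⟩, hyx⟩ := hp
        dsimp only at hsum hyx
        subst hyx
        rw [hf x, hf (x + g)] at hsum
        simp only [Finset.mem_filter, Finset.mem_univ, true_and]
        have h6 : a⁻¹ * E (T (a^3*x^3)) + a⁻¹ * E (T (a^3*(x+g)^3)) = 0 := by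
          linear_combination hsum - x * h2F
        have h7 : T (a^3*x^3) + T (a^3*(x+g)^3) = 0 := by
          apply hEinj
          rw [map_add, map_zero]
          apply mul_left_cancel₀ hainv
          rw [mul_zero, mul_add]
          exact h6
        rw [← htr₀ x, ← htr3 x g]
        exact h7
      · intro x hx
        simp only [Finset.mem_filter, Finset.mem_univ, true_and] at hx
        rw [Finset.mem_filter, hA, Finset.mem_filter]
        refine ⟨⟨Finset.mem_univ _, ?_⟩, rfl⟩
        show f x + f (x + g) = g
        rw [hf x, hf (x + g)]
        have h7 : T (a^3*x^3) + T (a^3*(x+g)^3) = 0 := by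
          rw [htr3 x g, htr₀ x]
          exact hx
        have h8 : T (a^3*(x+g)^3) = T (a^3*x^3) :=
          (by decide : ∀ p q : ZMod 2, p + q = 0 → q = p) _ _ h7
        rw [h8]
        linear_combination (x + a⁻¹ * E (T (a^3*x^3))) * h2F
      · rintro ⟨x, y⟩ hp
        rw [Finset.mem_filter] at hp
        have hxy : y = x + g := hp.2
        simp only [hxy]
      · intro x hx
        rfl
    -- second piece: pairs with p.2 = p.1 + (g + a⁻¹)
    have hc₁ : (A.filter fun p : F × F => p.2 = p.1 + (g + a⁻¹)).card
        = (Finset.univ.filter fun x : F =>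
            T (b₁*x + a^3*(g+a⁻¹)^3) = 1).card := by
      refine Finset.card_bij' (fun p _ => p.1) (fun x _ => (x, x + (g + a⁻¹))) ?_ ?_ ?_ ?_
      · rintro ⟨x, y⟩ hp
        rw [Finset.mem_filter, hA, Finset.mem_filter] at hp
        obtain ⟨⟨-, hsum⟩, hyx⟩ := hp
        dsimp only at hsum hyx
        subst hyx
        rw [hf x, hf (x + (g + a⁻¹))] at hsum
        simp only [Finset.mem_filter, Finset.mem_univ, true_and]
        have h6 : a⁻¹ * E (T (a^3*x^3)) + a⁻¹ * E (T (a^3*(x+(g+a⁻¹))^3)) = a⁻¹ * E 1 := by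
          rw [map_one]
          linear_combination hsum - x * h2F - a⁻¹ * h2F
        have h7 : T (a^3*x^3) + T (a^3*(x+(g+a⁻¹))^3) = 1 := by
          apply hEinj
          rw [map_add]
          apply mul_left_cancel₀ hainv
          rw [mul_add]
          exact h6
        rw [← htr₁ x, ← htr3 x (g+a⁻¹)]
        exact h7
      · intro x hx
        simp only [Finset.mem_filter, Finset.mem_univ, true_and] at hx
        rw [Finset.mem_filter, hA, Finset.mem_filter]
        refine ⟨⟨Finset.mem_univ _, ?_⟩, rfl⟩
        show f x + f (x + (g + a⁻¹)) = g
        rw [hf x, hf (x + (g + a⁻¹))]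
        have h7 : T (a^3*x^3) + T (a^3*(x+(g+a⁻¹))^3) = 1 := by
          rw [htr3 x (g+a⁻¹), htr₁ x]
          exact hx
        have h8 : T (a^3*(x+(g+a⁻¹))^3) = T (a^3*x^3) + 1 :=
          (by decide : ∀ p q : ZMod 2, p + q = 1 → q = p + 1) _ _ h7
        rw [h8, map_add, map_one]
        linear_combination (x + a⁻¹ * E (T (a^3*x^3)) + a⁻¹) * h2F
      · rintro ⟨x, y⟩ hp
        rw [Finset.mem_filter] at hp
        have hxy : y = x + (g + a⁻¹) := hp.2
        simp only [hxy]
      · intro x hx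
        rfl
    have hcount₀ : (Finset.univ.filter fun x : F => T (b₀*x + a^3*g^3) = 0).card * 2 = 2 ^ n := by
      rw [← hcard]
      have h := auxRDS_count b₀ (a^3*g^3) hb₀ 0
      rw [← hT] at h
      exact h
    have hcount₁ : (Finset.univ.filter fun x : F =>
        T (b₁*x + a^3*(g+a⁻¹)^3) = 1).card * 2 = 2 ^ n := by
      rw [← hcard]
      have h := auxRDS_count b₁ (a^3*(g+a⁻¹)^3) hb₁ 1
      rw [← hT] at h
      exact h
    rw [heq₁] at hsplitA
    have hpow8 : (2:ℕ) ^ n + 2 ^ n = 8 * 2 ^ (2*k - 1) := by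
      rw [hn]
      have h21 : 2*k+1 = (2*k-1) + 2 := by omega
      rw [h21, pow_add]
      ring
    omega
  · -- forbidden differences
    intro g hg hg0
    have hg' : g = a⁻¹ := by
      rcases hg with h | h
      · exact absurd h hg0
      · exact h
    subst hg'
    rw [hset a⁻¹, Set.ncard_coe_finset]
    rw [Finset.card_eq_zero, Finset.filter_eq_empty_iff]
    rintro ⟨d₁, d₂⟩ -
    rintro ⟨hd₁, hd₂, hne, hdiff⟩
    rw [hDfdef] at hd₁ hd₂
    obtain ⟨x, -, hx⟩ := Finset.mem_image.mp hd₁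
    obtain ⟨y, -, hy⟩ := Finset.mem_image.mp hd₂
    rw [← hx, ← hy, hsub] at hdiff
    rw [hf x, hf y] at hdiff
    have key : f x = f y := by
      apply (hfib x y).mpr
      rcases hmem (T (a^3*x^3)) with h1 | h1 <;> rcases hmem (T (a^3*y^3)) with h2 | h2 <;>
          rw [h1, h2] at hdiff <;> [right; left; left; right] <;>
        first
          | linear_combination hdiff - x * h2F
          | linear_combination hdiff - x * h2F - a⁻¹ * h2F
    exact hne (by rw [← hx, ← hy, key])
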